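/- Let $\lambda = (\lambda_1,\ldots,\lambda_n)$ be a sequence of nonnegative integers and define $R_\lambda(y_1,\ldots,y_n;t) = \sum_{w\in S_n} w\bigl(y_1^{\lambda_1}\cdots y_n^{\lambda_n} \prod_{i<j}\frac{y_i - ty_j}{y_i-y_j}\bigr)$. Then $R_\lambda$ is a polynomial in $y_1,\ldots,y_n,t$ (i.e., the apparent denominators cancel). -/

import Mathlib

open Finset MvPolynomial

lemma dvd_sub_aeval {σ : Type*} [DecidableEq σ] (a b : σ) (f : MvPolynomial σ ℚ) :
    (X a - X b : MvPolynomial σ ℚ) ∣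
      f - MvPolynomial.aeval (Function.update X a (X b)) f := by
  induction f using MvPolynomial.induction_on with
  | C r => simp
  | add f g hf hg =>
      have := dvd_add hf hg
      rw [map_add]
      convert this using 1
      ring
  | mul_X f i hf =>
      rw [map_mul, aeval_X]
      have key : f * X i - (aeval (Function.update X a (X b)) f) * (Function.update X a (X b) i) =
          (f - aeval (Function.update X a (X b)) f) * X i
            + (aeval (Function.update X a (X b)) f) * (X i - Function.update X a (X b) i) := by
        ring
      rw [key]
      refine dvd_add (Dvd.dvd.mul_right hf _) (Dvd.dvd.mul_left ?_ _)
      by_cases h : i = a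
      · subst h; rw [Function.update_self]
      · rw [Function.update_of_ne h]; simp

lemma prime_X_sub_X {σ : Type*} [DecidableEq σ] {a b : σ} (h : a ≠ b) :
    Prime (X a - X b : MvPolynomial σ ℚ) := by
  let e := (MvPolynomial.renameEquiv ℚ (Equiv.optionSubtypeNe a).symm).trans
    (MvPolynomial.optionEquivLeft ℚ {c : σ // c ≠ a})
  have he : e (X a - X b) = Polynomial.X - Polynomial.C (X ⟨b, Ne.symm h⟩) := by
    simp only [e, AlgEquiv.trans_apply, map_sub, renameEquiv_apply, rename_X]
    rw [Equiv.optionSubtypeNe_symm_self, Equiv.optionSubtypeNe_symm_of_ne (Ne.symm h),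
      optionEquivLeft_X_none, optionEquivLeft_X_some]
  have := Polynomial.prime_X_sub_C (R := MvPolynomial {c : σ // c ≠ a} ℚ) (X ⟨b, Ne.symm h⟩)
  rw [← he] at this
  exact (MulEquiv.prime_iff (p := X a - X b) e).mp this

lemma prod_primes_dvd' {M : Type*} [CommMonoidWithZero M] [IsCancelMulZero M] {ι : Type*} [DecidableEq ι]
    (s : Finset ι) (p : ι → M) (N : M)
    (hp : ∀ i ∈ s, Prime (p i))
    (hdvd : ∀ i ∈ s, p i ∣ N)
    (hpair : ∀ i ∈ s, ∀ j ∈ s, i ≠ j → ¬ p i ∣ p j) :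
    ∏ i ∈ s, p i ∣ N := by
  induction s using Finset.induction_on with
  | empty => simp
  | insert _ _ ha ih =>
      rename_i c s'
      rw [Finset.prod_insert ha]
      obtain ⟨m, hm⟩ := ih (fun i hi => hp i (Finset.mem_insert_of_mem hi))
        (fun i hi => hdvd i (Finset.mem_insert_of_mem hi))
        (fun i hi j hj hij => hpair i (Finset.mem_insert_of_mem hi) j (Finset.mem_insert_of_mem hj) hij)
      have hc : p c ∣ (∏ i ∈ s', p i) * m := hm ▸ hdvd c (Finset.mem_insert_self c s')
      have hcp : Prime (p c) := hp c (Finset.mem_insert_self c s')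
      have hnot : ¬ p c ∣ ∏ i ∈ s', p i := by
        rw [Prime.dvd_finset_prod_iff hcp]
        rintro ⟨j, hj, hdj⟩
        exact hpair c (Finset.mem_insert_self c s') j (Finset.mem_insert_of_mem hj)
          (fun hcj => ha (hcj ▸ hj)) hdj
      have : p c ∣ m := (hcp.dvd_or_dvd hc).resolve_left hnot
      obtain ⟨m', hm'⟩ := this
      exact ⟨m', by rw [hm, hm', mul_left_comm, mul_assoc]⟩

lemma vand_perm {A : Type*} [CommRing A] {n : ℕ} (v : Fin n → A) (σ : Equiv.Perm (Fin n)) :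
    ∏ i, ∏ j ∈ Ioi i, (v (σ i) - v (σ j)) =
      ((Equiv.Perm.sign σ : ℤ) : A) * ∏ i, ∏ j ∈ Ioi i, (v i - v j) := by
  have key : ∀ u : Fin n → A, ∏ i, ∏ j ∈ Ioi i, (u i - u j) =
      (∏ i : Fin n, ∏ _j ∈ Ioi i, (-1 : A)) * (Matrix.vandermonde u).det := by
    intro u
    rw [Matrix.det_vandermonde, ← Finset.prod_mul_distrib]
    refine Finset.prod_congr rfl fun i _ => ?_
    rw [← Finset.prod_mul_distrib]
    refine Finset.prod_congr rfl fun j _ => ?_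
    ring
  have hsub : Matrix.vandermonde (v ∘ σ) = (Matrix.vandermonde v).submatrix σ id := by
    ext i j; simp [Matrix.vandermonde_apply]
  calc ∏ i, ∏ j ∈ Ioi i, (v (σ i) - v (σ j))
      = (∏ i : Fin n, ∏ _j ∈ Ioi i, (-1 : A)) * (Matrix.vandermonde (v ∘ σ)).det := key (v ∘ σ)
    _ = ((Equiv.Perm.sign σ : ℤ) : A) * ((∏ i : Fin n, ∏ _j ∈ Ioi i, (-1 : A)) * (Matrix.vandermonde v).det) := by
        rw [hsub, Matrix.det_permute]; ring
    _ = _ := by rw [← key v]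
lemma X_sub_X_ne {σ : Type*} {a b : σ} (h : a ≠ b) : (X a - X b : MvPolynomial σ ℚ) ≠ 0 :=
  sub_ne_zero.mpr fun hc => h (MvPolynomial.X_injective hc)

noncomputable def PP (n : ℕ) (lam : Fin n → ℕ) (w : Equiv.Perm (Fin n)) :
    MvPolynomial (Option (Fin n)) ℚ :=
  (∏ i, X (some (w i)) ^ lam i) *
    ∏ i, ∏ j ∈ Ioi i, (X (some (w i)) - X none * X (some (w j)))

noncomputable def NN (n : ℕ) (lam : Fin n → ℕ) : MvPolynomial (Option (Fin n)) ℚ :=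
  ∑ w : Equiv.Perm (Fin n),
    ((Equiv.Perm.sign w : ℤ) : MvPolynomial (Option (Fin n)) ℚ) * PP n lam w

lemma rename_PP (n : ℕ) (lam : Fin n → ℕ) (s w : Equiv.Perm (Fin n)) :
    rename (Option.map ⇑s) (PP n lam w) = PP n lam (s * w) := by
  simp [PP, map_prod, map_pow, Equiv.Perm.mul_apply]

lemma rename_NN (n : ℕ) (lam : Fin n → ℕ) {a b : Fin n} (hab : a ≠ b) :
    rename (Option.map ⇑(Equiv.swap a b)) (NN n lam) = - NN n lam := by
  set s := Equiv.swap a b with hs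
  have h1 : rename (Option.map ⇑s) (NN n lam) =
      ∑ w : Equiv.Perm (Fin n),
        ((Equiv.Perm.sign w : ℤ) : MvPolynomial (Option (Fin n)) ℚ) * PP n lam (s * w) := by
    rw [NN, map_sum]
    exact Finset.sum_congr rfl fun w _ => by rw [map_mul, map_intCast, rename_PP]
  rw [h1, NN, ← Finset.sum_neg_distrib]
  refine (Fintype.sum_bijective (fun w => s * w) (Group.mulLeft_bijective s) _ _ fun w => ?_).symm
  rw [show s * (s * w) = w by rw [← mul_assoc, hs, Equiv.swap_mul_self, one_mul]]
  rw [map_mul, Equiv.Perm.sign_swap hab]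
  push_cast
  ring


lemma dvd_NN (n : ℕ) (lam : Fin n → ℕ) {a b : Fin n} (hab : a ≠ b) :
    (X (some a) - X (some b) : MvPolynomial (Option (Fin n)) ℚ) ∣ NN n lam := by
  set φ : MvPolynomial (Option (Fin n)) ℚ →ₐ[ℚ] MvPolynomial (Option (Fin n)) ℚ :=
    aeval (Function.update X (some a) (X (some b))) with hφ
  have hcomp : ∀ f, φ (rename (Option.map ⇑(Equiv.swap a b)) f) = φ f := by
    intro f
    have : φ.comp (rename (R := ℚ) (Option.map ⇑(Equiv.swap a b))) = φ := by
      apply MvPolynomial.algHom_ext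
      rintro (_ | i)
      · simp [hφ]
      · simp only [AlgHom.comp_apply, rename_X, Option.map_some, hφ, aeval_X]
        rcases eq_or_ne i a with rfl | hia
        · rw [Equiv.swap_apply_left, Function.update_self,
            Function.update_of_ne (by simpa using (Ne.symm hab))]
        · rcases eq_or_ne i b with rfl | hib
          · rw [Equiv.swap_apply_right, Function.update_self,
              Function.update_of_ne (by simpa using (Ne.symm hab))]
          · rw [Equiv.swap_apply_of_ne_of_ne hia hib]
    exact DFunLike.congr_fun this f
  have hzero : φ (NN n lam) = 0 := by
    have h1 : φ (NN n lam) = - φ (NN n lam) := by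
      conv_lhs => rw [← hcomp (NN n lam), rename_NN n lam hab, map_neg]
    have h2 : (2 : MvPolynomial (Option (Fin n)) ℚ) * φ (NN n lam) = 0 := by
      rw [two_mul]
      nth_rewrite 1 [h1]
      ring
    exact (mul_eq_zero.mp h2).resolve_left two_ne_zero
  have := dvd_sub_aeval (some a) (some b) (NN n lam)
  rw [← hφ, hzero, sub_zero] at this
  exact this

lemma not_dvd_pair (n : ℕ) {a b c d : Fin n} (hab : a < b) (hcd : c < d)
    (hne : ¬ (a = c ∧ b = d)) :
    ¬ (X (some a) - X (some b) : MvPolynomial (Option (Fin n)) ℚ) ∣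
      (X (some c) - X (some d)) := by
  rintro ⟨r, hr⟩
  have h0 : (aeval (Function.update (X : Option (Fin n) → MvPolynomial (Option (Fin n)) ℚ) (some a) (X (some b))))
      (X (some c) - X (some d) : MvPolynomial (Option (Fin n)) ℚ) = 0 := by
    rw [hr, map_mul, map_sub, aeval_X, aeval_X, Function.update_self,
      Function.update_of_ne (by simpa using hab.ne'), sub_self, zero_mul]
  rw [map_sub, aeval_X, aeval_X, Function.update_apply, Function.update_apply] at h0
  rcases eq_or_ne c a with heq | hca
  · rcases eq_or_ne d a with heq2 | hda
    · exact hcd.ne (heq.trans heq2.symm)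
    · rw [if_pos (by rw [heq]), if_neg (by simpa using hda)] at h0
      exact hne ⟨heq.symm, Option.some.inj (MvPolynomial.X_injective (sub_eq_zero.mp h0))⟩
  · rcases eq_or_ne d a with heq2 | hda
    · rw [if_neg (by simpa using hca), if_pos (by rw [heq2])] at h0
      have hcb : c = b := Option.some.inj (MvPolynomial.X_injective (sub_eq_zero.mp h0))
      have h1 : c < a := heq2 ▸ hcd
      rw [hcb] at h1
      exact lt_asymm hab h1
    · rw [if_neg (by simpa using hca), if_neg (by simpa using hda)] at h0
      exact hcd.ne (Option.some.inj (MvPolynomial.X_injective (sub_eq_zero.mp h0)))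

lemma vand_dvd_NN (n : ℕ) (lam : Fin n → ℕ) :
    (∏ i, ∏ j ∈ Ioi i, (X (some i) - X (some j) : MvPolynomial (Option (Fin n)) ℚ)) ∣
      NN n lam := by
  have hprod : (∏ i, ∏ j ∈ Ioi i, (X (some i) - X (some j) : MvPolynomial (Option (Fin n)) ℚ)) =
      ∏ q ∈ (univ : Finset (Fin n)).sigma fun i => Ioi i,
        (X (some q.1) - X (some q.2) : MvPolynomial (Option (Fin n)) ℚ) :=
    (Finset.prod_sigma (univ : Finset (Fin n)) (fun i => Ioi i)
      (fun q => (X (some q.1) - X (some q.2) : MvPolynomial (Option (Fin n)) ℚ))).symm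
  rw [hprod]
  have hlt : ∀ q ∈ (univ : Finset (Fin n)).sigma fun i => Ioi i, q.1 < q.2 := fun q hq =>
    Finset.mem_Ioi.mp (Finset.mem_sigma.mp hq).2
  refine prod_primes_dvd' _ _ _ (fun q hq => ?_) (fun q hq => ?_) (fun q hq q' hq' hne => ?_)
  · exact prime_X_sub_X (by simpa using (hlt q hq).ne)
  · exact dvd_NN n lam (hlt q hq).ne
  · exact not_dvd_pair n (hlt q hq) (hlt q' hq')
      (fun ⟨h1, h2⟩ => hne (Sigma.ext h1 (heq_of_eq h2)))

lemma main_aux (n : ℕ) (lam : Fin n → ℕ) :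
    ∃ p : MvPolynomial (Option (Fin n)) ℚ,
      algebraMap (MvPolynomial (Option (Fin n)) ℚ)
          (FractionRing (MvPolynomial (Option (Fin n)) ℚ)) p =
        ∑ w : Equiv.Perm (Fin n),
          (∏ i, algebraMap (MvPolynomial (Option (Fin n)) ℚ)
              (FractionRing (MvPolynomial (Option (Fin n)) ℚ)) (X (some (w i))) ^ lam i) *
          ∏ i, ∏ j ∈ Ioi i,
            ((algebraMap (MvPolynomial (Option (Fin n)) ℚ)
                (FractionRing (MvPolynomial (Option (Fin n)) ℚ)) (X (some (w i))) -
              algebraMap (MvPolynomial (Option (Fin n)) ℚ)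
                (FractionRing (MvPolynomial (Option (Fin n)) ℚ)) (X none) *
              algebraMap (MvPolynomial (Option (Fin n)) ℚ)
                (FractionRing (MvPolynomial (Option (Fin n)) ℚ)) (X (some (w j)))) /
             (algebraMap (MvPolynomial (Option (Fin n)) ℚ)
                (FractionRing (MvPolynomial (Option (Fin n)) ℚ)) (X (some (w i))) -
              algebraMap (MvPolynomial (Option (Fin n)) ℚ)
                (FractionRing (MvPolynomial (Option (Fin n)) ℚ)) (X (some (w j))))) := by
  set K := FractionRing (MvPolynomial (Option (Fin n)) ℚ) with hK
  set ι := algebraMap (MvPolynomial (Option (Fin n)) ℚ) K with hι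
  set y : Fin n → K := fun i => ι (X (some i)) with hy
  set τ : K := ι (X none) with hτ
  have hinj : Function.Injective ι := IsFractionRing.injective _ _
  have hΔ : (∏ i, ∏ j ∈ Ioi i, (y i - y j)) ≠ 0 := by
    rw [Finset.prod_ne_zero_iff]
    intro i _
    rw [Finset.prod_ne_zero_iff]
    intro j hj h
    have hij : (some i : Option (Fin n)) ≠ some j := by
      simpa using (Finset.mem_Ioi.mp hj).ne
    apply X_sub_X_ne hij
    apply hinj
    rw [map_sub, map_zero]
    exact h
  obtain ⟨m, hm⟩ := vand_dvd_NN n lam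
  refine ⟨m, ?_⟩
  have hterm : ∀ w : Equiv.Perm (Fin n),
      (∏ i, ∏ j ∈ Ioi i, (y i - y j)) * ((∏ i, y (w i) ^ lam i) *
          ∏ i, ∏ j ∈ Ioi i, ((y (w i) - τ * y (w j)) / (y (w i) - y (w j)))) =
        ι (((Equiv.Perm.sign w : ℤ) : MvPolynomial (Option (Fin n)) ℚ) * PP n lam w) := by
    intro w
    have hPP : ι (PP n lam w) =
        (∏ i, y (w i) ^ lam i) * ∏ i, ∏ j ∈ Ioi i, (y (w i) - τ * y (w j)) := by
      simp [PP, map_prod, map_pow, hy, hτ]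
    have hden : (∏ i, ∏ j ∈ Ioi i, (y (w i) - y (w j))) =
        ((Equiv.Perm.sign w : ℤ) : K) * ∏ i, ∏ j ∈ Ioi i, (y i - y j) := vand_perm y w
    have hsplit : (∏ i, ∏ j ∈ Ioi i, ((y (w i) - τ * y (w j)) / (y (w i) - y (w j)))) =
        (∏ i, ∏ j ∈ Ioi i, (y (w i) - τ * y (w j))) /
          (∏ i, ∏ j ∈ Ioi i, (y (w i) - y (w j))) := by
      simp [Finset.prod_div_distrib]
    have hc2 : ((Equiv.Perm.sign w : ℤ) : K) * ((Equiv.Perm.sign w : ℤ) : K) = 1 := by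
      rcases Int.units_eq_one_or (Equiv.Perm.sign w) with h | h <;> simp [h] <;> norm_num
    have hc0 : ((Equiv.Perm.sign w : ℤ) : K) ≠ 0 := fun h => by simp [h] at hc2
    rw [map_mul, map_intCast, hPP, hsplit, hden]
    rw [div_eq_mul_inv, mul_inv, inv_eq_of_mul_eq_one_right hc2]
    linear_combination (((Equiv.Perm.sign w : ℤ) : K) * (∏ i, y (w i) ^ lam i) *
      (∏ i, ∏ j ∈ Ioi i, (y (w i) - τ * y (w j)))) * mul_inv_cancel₀ hΔ
  have hsum : (∏ i, ∏ j ∈ Ioi i, (y i - y j)) *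
      (∑ w : Equiv.Perm (Fin n), (∏ i, y (w i) ^ lam i) *
        ∏ i, ∏ j ∈ Ioi i, ((y (w i) - τ * y (w j)) / (y (w i) - y (w j)))) = ι (NN n lam) := by
    rw [Finset.mul_sum, NN, map_sum]
    exact Finset.sum_congr rfl fun w _ => hterm w
  rw [hm, map_mul] at hsum
  have hΔmap : ι (∏ i, ∏ j ∈ Ioi i, (X (some i) - X (some j))) =
      ∏ i, ∏ j ∈ Ioi i, (y i - y j) := by
    simp [map_prod, hy]
  rw [hΔmap] at hsum
  exact (mul_left_cancel₀ hΔ hsum).symm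

/-- For a sequence `λ = (λ₁,…,λₙ)` of nonnegative integers, the symmetrized expression
`R_λ(y₁,…,yₙ;t) = ∑_{w∈Sₙ} w(y₁^{λ₁}⋯yₙ^{λₙ} ∏_{i<j} (yᵢ-tyⱼ)/(yᵢ-yⱼ))` is a polynomial
in `y₁,…,yₙ,t` (the apparent denominators cancel). -/
theorem R_lambda_is_polynomial (n : ℕ) (lam : Fin n → ℕ) :
    let F := FractionRing (MvPolynomial (Option (Fin n)) ℚ)
    let y : Fin n → F := fun i => algebraMap (MvPolynomial (Option (Fin n)) ℚ) F
      (MvPolynomial.X (some i))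
    let t : F := algebraMap (MvPolynomial (Option (Fin n)) ℚ) F (MvPolynomial.X none)
    ∃ p : MvPolynomial (Option (Fin n)) ℚ,
      algebraMap (MvPolynomial (Option (Fin n)) ℚ) F p =
        ∑ w : Equiv.Perm (Fin n), (∏ i, y (w i) ^ lam i) *
          ∏ i, ∏ j ∈ Ioi i, ((y (w i) - t * y (w j)) / (y (w i) - y (w j))) := by
  intro F y t
  exact main_aux n lam
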